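/- Let δ ∈ ℝ, s ≥ 0, times 0 = T_0 < T_1 < ... < T_m, and non-negative credit transfers e_1, ..., e_m. Define the cash value by s(0) := s, s(t) := s(T_{k-1}) e^{δ(t − T_{k-1})} for t ∈ (T_{k-1}, T_k) (no payments between death times), and at each death time T_k the participant receives a lump-sum payment ΔR_k and the credit transfer e_k, so that s(T_k) = s(T_k−) + e_k − ΔR_k, where ΔR_k := e_k (each payment equals the credit transfer received at that time). Then s(t) = s e^{δt} for all t ≥ 0; in particular, the discounted cash value e^{−δt} s(t) is constantly equal to the initial investment s, all cash values are non-negative, and the total discounted payments equal Σ_{k=1}^m e^{−δ T_k} e_k ≥ 0. -/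

import Mathlib

open Finset

/-- A fair transfer tontine (payments at death times equal to the credit transfers
received) keeps the discounted cash value constant at the initial investment, has
non-negative cash values, and its total discounted payments equal the non-negative sum
of discounted credit transfers. -/
theorem stmt_16 (δ s : ℝ) (hs : 0 ≤ s)
    (m : ℕ) (T : ℕ → ℝ) (hT0 : T 0 = 0)
    (hTmono : ∀ k, k < m → T k < T (k + 1))
    (e : ℕ → ℝ) (he : ∀ k, 1 ≤ k → k ≤ m → 0 ≤ e k)
    (ΔR : ℕ → ℝ) (hΔR : ∀ k, 1 ≤ k → k ≤ m → ΔR k = e k)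
    (sfun : ℝ → ℝ) (hsfun0 : sfun 0 = s)
    (hbetween : ∀ k, 1 ≤ k → k ≤ m → ∀ t, T (k - 1) < t → t < T k →
      sfun t = sfun (T (k - 1)) * Real.exp (δ * (t - T (k - 1))))
    (hjump : ∀ k, 1 ≤ k → k ≤ m →
      sfun (T k) = sfun (T (k - 1)) * Real.exp (δ * (T k - T (k - 1))) + e k - ΔR k)
    (hafter : ∀ t, T m < t → sfun t = sfun (T m) * Real.exp (δ * (t - T m))) :
    (∀ t, 0 ≤ t → sfun t = s * Real.exp (δ * t)) ∧
    (∀ t, 0 ≤ t → Real.exp (-δ * t) * sfun t = s) ∧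
    (∀ t, 0 ≤ t → 0 ≤ sfun t) ∧
    (∑ k ∈ Finset.Icc 1 m, Real.exp (-δ * T k) * ΔR k
      = ∑ k ∈ Finset.Icc 1 m, Real.exp (-δ * T k) * e k) ∧
    0 ≤ ∑ k ∈ Finset.Icc 1 m, Real.exp (-δ * T k) * e k := by
  classical
  have hTk : ∀ k, k ≤ m → sfun (T k) = s * Real.exp (δ * T k) := by
    intro k hk
    induction k with
    | zero => simp [hT0, hsfun0]
    | succ n ih =>
      have hn : n ≤ m := Nat.le_of_succ_le hk
      have h1 : 1 ≤ n + 1 := Nat.succ_le_succ (Nat.zero_le n)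
      have hj := hjump (n + 1) h1 hk
      simp only [Nat.add_sub_cancel] at hj
      rw [hΔR (n + 1) h1 hk] at hj
      rw [hj, ih hn, mul_assoc, ← Real.exp_add]
      ring_nf
  have main : ∀ t, 0 ≤ t → sfun t = s * Real.exp (δ * t) := by
    intro t ht
    rcases eq_or_lt_of_le ht with h0 | hpos
    · rw [← h0]; simp [hsfun0]
    by_cases hgt : T m < t
    · rw [hafter t hgt, hTk m le_rfl, mul_assoc, ← Real.exp_add]; ring_nf
    push_neg at hgt
    have hex : ∃ k, t ≤ T k := ⟨m, hgt⟩
    set k := Nat.find hex with hkdef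
    have hkP : t ≤ T k := Nat.find_spec hex
    have hk1 : 1 ≤ k := by
      rcases Nat.eq_zero_or_pos k with h | h
      · exfalso
        have := hkP
        rw [h, hT0] at this
        linarith
      · exact h
    have hkm : k ≤ m := Nat.find_le hgt
    have hlt : T (k - 1) < t := by
      have : ¬ t ≤ T (k - 1) := Nat.find_min hex (Nat.sub_lt hk1 one_pos)
      linarith
    rcases eq_or_lt_of_le hkP with heq | hlt2
    · rw [heq]; exact hTk k hkm
    · rw [hbetween k hk1 hkm t hlt hlt2, hTk (k - 1) (le_trans (Nat.sub_le k 1) hkm),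
        mul_assoc, ← Real.exp_add]
      ring_nf
  refine ⟨main, ?_, ?_, ?_, ?_⟩
  · intro t ht
    rw [main t ht, ← mul_assoc, mul_comm (Real.exp (-δ * t)) s, mul_assoc, ← Real.exp_add]
    simp
  · intro t ht
    rw [main t ht]
    positivity
  · exact Finset.sum_congr rfl fun k hk => by
      rw [hΔR k (Finset.mem_Icc.mp hk).1 (Finset.mem_Icc.mp hk).2]
  · exact Finset.sum_nonneg fun k hk =>
      mul_nonneg (Real.exp_pos _).le (he k (Finset.mem_Icc.mp hk).1 (Finset.mem_Icc.mp hk).2)
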